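/- Let b, c : ℝ → ℝ be smooth, let m₁, m₂, m₃ ∈ ℝ satisfy m₁ = m₃² − m₂², define m(y) = m₁·y + m₂·B(y) + m₃·C(y), and set Q(t,x) = exp(m₂t + m₃x). Then for every smooth function u : ℝ² → ℝ (not necessarily a solution), the current generated by the space-translation characteristic p = −∂ₓu and the adjoint-symmetry Q, namely Ψᵗ = −Q·∂ₜ∂ₓu − (b(u) − m₂)·Q·∂ₓu and Ψˣ = Q·∂ₓ²u − (c(u) + m₃)·Q·∂ₓu, satisfies ∂ₜΨᵗ + ∂ₓ(Ψˣ + Q·F[u]) = m₃·Q·F[u] on ℝ². (Thus the multiplier of this symmetry-generated conservation law is ∂ₓQ = m₃·Q.) -/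

import Mathlib

noncomputable section

open Real

/-- Partial derivative in the first (time) variable. -/
def Dt (u : ℝ → ℝ → ℝ) : ℝ → ℝ → ℝ := fun t x => deriv (fun s => u s x) t

/-- Partial derivative in the second (space) variable. -/
def Dx (u : ℝ → ℝ → ℝ) : ℝ → ℝ → ℝ := fun t x => deriv (fun s => u t s) x

/-- Smoothness (C^∞) of a function of two real variables. -/
def Smooth2 (u : ℝ → ℝ → ℝ) : Prop := ContDiff ℝ (⊤ : ℕ∞) (fun p : ℝ × ℝ => u p.1 p.2)
/-- The semilinear wave operator F[u] = ∂ₜ²u − ∂ₓ²u + b(u)∂ₜu + c(u)∂ₓu + m(u). -/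
def Fop (b c m : ℝ → ℝ) (u : ℝ → ℝ → ℝ) : ℝ → ℝ → ℝ := fun t x =>
  Dt (Dt u) t x - Dx (Dx u) t x + b (u t x) * Dt u t x + c (u t x) * Dx u t x + m (u t x)

/-- The adjoint linearized operator along u:
L*[u]q = ∂ₜ²q − ∂ₓ²q − b(u)∂ₜq − c(u)∂ₓq + m′(u)q. -/
def Lstar (b c m : ℝ → ℝ) (u q : ℝ → ℝ → ℝ) : ℝ → ℝ → ℝ := fun t x =>
  Dt (Dt q) t x - Dx (Dx q) t x - b (u t x) * Dt q t x - c (u t x) * Dx q t x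
    + deriv m (u t x) * q t x

namespace Aux15

def U2 (u : ℝ → ℝ → ℝ) : ℝ × ℝ → ℝ := fun p => u p.1 p.2

lemma hasDerivAt_fst {u : ℝ → ℝ → ℝ} (hu : Smooth2 u) (t x : ℝ) :
    HasDerivAt (fun s => u s x) (fderiv ℝ (U2 u) (t, x) (1, 0)) t := by
  have h := ((hu.differentiable (by simp)) (t, x)).hasFDerivAt
  have hL : HasDerivAt (fun s : ℝ => ((s, x) : ℝ × ℝ)) ((1:ℝ), (0:ℝ)) t :=
    HasDerivAt.prodMk (hasDerivAt_id t) (hasDerivAt_const t x)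
  exact h.comp_hasDerivAt t hL

lemma hasDerivAt_snd {u : ℝ → ℝ → ℝ} (hu : Smooth2 u) (t x : ℝ) :
    HasDerivAt (fun y => u t y) (fderiv ℝ (U2 u) (t, x) (0, 1)) x := by
  have h := ((hu.differentiable (by simp)) (t, x)).hasFDerivAt
  have hL : HasDerivAt (fun y : ℝ => ((t, y) : ℝ × ℝ)) ((0:ℝ), (1:ℝ)) x :=
    HasDerivAt.prodMk (hasDerivAt_const x t) (hasDerivAt_id x)
  exact h.comp_hasDerivAt x hL

lemma Dt_eq {u : ℝ → ℝ → ℝ} (hu : Smooth2 u) (t x : ℝ) :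
    Dt u t x = fderiv ℝ (U2 u) (t, x) (1, 0) := (hasDerivAt_fst hu t x).deriv

lemma Dx_eq {u : ℝ → ℝ → ℝ} (hu : Smooth2 u) (t x : ℝ) :
    Dx u t x = fderiv ℝ (U2 u) (t, x) (0, 1) := (hasDerivAt_snd hu t x).deriv

lemma smooth_fderiv_apply {u : ℝ → ℝ → ℝ} (hu : Smooth2 u) (v : ℝ × ℝ) :
    ContDiff ℝ (⊤ : ℕ∞) (fun p : ℝ × ℝ => fderiv ℝ (U2 u) p v) := by
  have h : ContDiff ℝ (⊤ : ℕ∞) (fderiv ℝ (U2 u)) := by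
    exact ContDiff.fderiv_right hu (by exact_mod_cast le_top)
  exact h.clm_apply contDiff_const

lemma smooth_Dt {u : ℝ → ℝ → ℝ} (hu : Smooth2 u) : Smooth2 (Dt u) := by
  have : (fun p : ℝ × ℝ => Dt u p.1 p.2) = fun p => fderiv ℝ (U2 u) p (1, 0) := by
    funext p; exact Dt_eq hu p.1 p.2
  rw [Smooth2, this]; exact smooth_fderiv_apply hu _

lemma smooth_Dx {u : ℝ → ℝ → ℝ} (hu : Smooth2 u) : Smooth2 (Dx u) := by
  have : (fun p : ℝ × ℝ => Dx u p.1 p.2) = fun p => fderiv ℝ (U2 u) p (0, 1) := by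
    funext p; exact Dx_eq hu p.1 p.2
  rw [Smooth2, this]; exact smooth_fderiv_apply hu _

lemma comm {u : ℝ → ℝ → ℝ} (hu : Smooth2 u) : Dt (Dx u) = Dx (Dt u) := by
  funext t x
  have hdiff : DifferentiableAt ℝ (fderiv ℝ (U2 u)) (t, x) := by
    have h : ContDiff ℝ (⊤ : ℕ∞) (fderiv ℝ (U2 u)) := ContDiff.fderiv_right hu (by exact_mod_cast le_top)
    exact (h.differentiable (by simp)) _
  have key : ∀ v w : ℝ × ℝ, fderiv ℝ (fun p => fderiv ℝ (U2 u) p v) (t, x) w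
      = fderiv ℝ (fderiv ℝ (U2 u)) (t, x) w v := by
    intro v w
    rw [fderiv_clm_apply hdiff (differentiableAt_const v)]
    simp
  have hsymm : fderiv ℝ (fderiv ℝ (U2 u)) (t, x) (1, 0) (0, 1)
      = fderiv ℝ (fderiv ℝ (U2 u)) (t, x) (0, 1) (1, 0) := by
    have := hu.contDiffAt (x := (t, x))
    exact (this.isSymmSndFDerivAt (by rw [minSmoothness_of_isRCLikeNormedField]; rw [show (2 : WithTop ℕ∞) = ((2:ℕ∞) : WithTop ℕ∞) by rfl]; exact WithTop.coe_le_coe.mpr le_top)) _ _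
  have e1 : Dt (Dx u) t x = fderiv ℝ (fderiv ℝ (U2 u)) (t, x) (1, 0) (0, 1) := by
    rw [Dt_eq (smooth_Dx hu) t x]
    have : U2 (Dx u) = fun p => fderiv ℝ (U2 u) p (0, 1) := by
      funext p; exact Dx_eq hu p.1 p.2
    rw [this, key]
  have e2 : Dx (Dt u) t x = fderiv ℝ (fderiv ℝ (U2 u)) (t, x) (0, 1) (1, 0) := by
    rw [Dx_eq (smooth_Dt hu) t x]
    have : U2 (Dt u) = fun p => fderiv ℝ (U2 u) p (1, 0) := by
      funext p; exact Dt_eq hu p.1 p.2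
    rw [this, key]
  rw [e1, e2, hsymm]

lemma hderiv_fst {u : ℝ → ℝ → ℝ} (hu : Smooth2 u) (t x : ℝ) :
    HasDerivAt (fun s => u s x) (Dt u t x) t := by
  rw [Dt_eq hu]; exact hasDerivAt_fst hu t x

lemma hderiv_snd {u : ℝ → ℝ → ℝ} (hu : Smooth2 u) (t x : ℝ) :
    HasDerivAt (fun y => u t y) (Dx u t x) x := by
  rw [Dx_eq hu]; exact hasDerivAt_snd hu t x

end Aux15

/-- The multiplier of the conservation law generated by the space-translation
characteristic p = −∂ₓu and the adjoint-symmetry Q = exp(m₂t + m₃x) is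
∂ₓQ = m₃Q. -/
theorem stmt_15
    (b c : ℝ → ℝ) (hb : ContDiff ℝ (⊤ : ℕ∞) b) (hc : ContDiff ℝ (⊤ : ℕ∞) c)
    (m₁ m₂ m₃ : ℝ) (hm₁ : m₁ = m₃ ^ 2 - m₂ ^ 2)
    (m B C : ℝ → ℝ)
    (hB : ∀ y, B y = ∫ s in (0:ℝ)..y, b s)
    (hC : ∀ y, C y = ∫ s in (0:ℝ)..y, c s)
    (hmdef : ∀ y, m y = m₁ * y + m₂ * B y + m₃ * C y)
    (Q : ℝ → ℝ → ℝ) (hQdef : ∀ t x, Q t x = Real.exp (m₂ * t + m₃ * x))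
    (u : ℝ → ℝ → ℝ) (hu : Smooth2 u) :
    ∀ t x : ℝ,
      Dt (fun t x =>
          -(Q t x) * Dt (Dx u) t x - (b (u t x) - m₂) * Q t x * Dx u t x) t x
      + Dx (fun t x =>
          (Q t x * Dx (Dx u) t x - (c (u t x) + m₃) * Q t x * Dx u t x)
            + Q t x * Fop b c m u t x) t x
        = m₃ * Q t x * Fop b c m u t x := by
  intro t x
  -- derivatives of Q
  have hQt : HasDerivAt (fun s => Q s x) (m₂ * Q t x) t := by
    have h1 : (fun s => Q s x) = fun s => Real.exp (m₂ * s + m₃ * x) :=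
      funext fun s => hQdef s x
    rw [h1, hQdef]
    have h2 := (((hasDerivAt_id t).const_mul m₂).add_const (m₃ * x)).exp
    simp only [id_eq] at h2
    convert h2 using 1; ring
  have hQx : HasDerivAt (fun y => Q t y) (m₃ * Q t x) x := by
    have h1 : (fun y => Q t y) = fun y => Real.exp (m₂ * t + m₃ * y) :=
      funext fun y => hQdef t y
    rw [h1, hQdef]
    have h2 := (((hasDerivAt_id x).const_mul m₃).const_add (m₂ * t)).exp
    simp only [id_eq] at h2
    convert h2 using 1; ring
  -- derivative of m
  have hm' : ∀ y : ℝ, HasDerivAt m (m₁ + m₂ * b y + m₃ * c y) y := by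
    intro y
    have hB' : HasDerivAt B (b y) y := by
      have hBe : B = fun z => ∫ s in (0:ℝ)..z, b s := funext hB
      rw [hBe]
      exact intervalIntegral.integral_hasDerivAt_right
        (hb.continuous.intervalIntegrable _ _)
        (hb.continuous.stronglyMeasurable.stronglyMeasurableAtFilter)
        hb.continuous.continuousAt
    have hC' : HasDerivAt C (c y) y := by
      have hCe : C = fun z => ∫ s in (0:ℝ)..z, c s := funext hC
      rw [hCe]
      exact intervalIntegral.integral_hasDerivAt_right
        (hc.continuous.intervalIntegrable _ _)
        (hc.continuous.stronglyMeasurable.stronglyMeasurableAtFilter)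
        hc.continuous.continuousAt
    have hme : m = fun z => m₁ * z + m₂ * B z + m₃ * C z := funext hmdef
    rw [hme]
    have := (((hasDerivAt_id y).const_mul m₁).add (hB'.const_mul m₂)).add (hC'.const_mul m₃)
    simp only [id_eq] at this
    exact this.congr_deriv (by ring)
  -- smoothness of partials
  have sDx := Aux15.smooth_Dx hu
  have sDt := Aux15.smooth_Dt hu
  -- t-direction components
  have hut : HasDerivAt (fun s => u s x) (Dt u t x) t := Aux15.hderiv_fst hu t x
  have huxt : HasDerivAt (fun s => Dx u s x) (Dt (Dx u) t x) t := Aux15.hderiv_fst sDx t x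
  have hutxt : HasDerivAt (fun s => Dt (Dx u) s x) (Dt (Dt (Dx u)) t x) t :=
    Aux15.hderiv_fst (Aux15.smooth_Dt sDx) t x
  have hbt : HasDerivAt (fun s => b (u s x)) (deriv b (u t x) * Dt u t x) t :=
    HasDerivAt.comp t ((hb.differentiable (by simp)) (u t x)).hasDerivAt hut
  -- x-direction components
  have hux : HasDerivAt (fun y => u t y) (Dx u t x) x := Aux15.hderiv_snd hu t x
  have huxx : HasDerivAt (fun y => Dx u t y) (Dx (Dx u) t x) x := Aux15.hderiv_snd sDx t x
  have huxxx : HasDerivAt (fun y => Dx (Dx u) t y) (Dx (Dx (Dx u)) t x) x :=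
    Aux15.hderiv_snd (Aux15.smooth_Dx sDx) t x
  have hutx2 : HasDerivAt (fun y => Dt u t y) (Dx (Dt u) t x) x := Aux15.hderiv_snd sDt t x
  have huttx : HasDerivAt (fun y => Dt (Dt u) t y) (Dx (Dt (Dt u)) t x) x :=
    Aux15.hderiv_snd (Aux15.smooth_Dt sDt) t x
  have hbx : HasDerivAt (fun y => b (u t y)) (deriv b (u t x) * Dx u t x) x :=
    HasDerivAt.comp x ((hb.differentiable (by simp)) (u t x)).hasDerivAt hux
  have hcx : HasDerivAt (fun y => c (u t y)) (deriv c (u t x) * Dx u t x) x :=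
    HasDerivAt.comp x ((hc.differentiable (by simp)) (u t x)).hasDerivAt hux
  have hmx : HasDerivAt (fun y => m (u t y))
      ((m₁ + m₂ * b (u t x) + m₃ * c (u t x)) * Dx u t x) x :=
    HasDerivAt.comp x (hm' (u t x)) hux
  -- the two big derivatives
  have H1 := (hQt.neg.mul hutxt).sub (((hbt.sub_const m₂).mul hQt).mul huxt)
  have hF := ((((huttx.sub huxxx).add (hbx.mul hutx2)).add (hcx.mul huxx)).add hmx)
  have H2 := ((hQx.mul huxxx).sub (((hcx.add_const m₃).mul hQx).mul huxx)).add (hQx.mul hF)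
  have e1 : Dt (fun t x =>
      -(Q t x) * Dt (Dx u) t x - (b (u t x) - m₂) * Q t x * Dx u t x) t x
      = -(m₂ * Q t x) * Dt (Dx u) t x - Q t x * Dt (Dt (Dx u)) t x
        - deriv b (u t x) * Dt u t x * Q t x * Dx u t x
        - (b (u t x) - m₂) * (m₂ * Q t x * Dx u t x + Q t x * Dt (Dx u) t x) :=
    H1.deriv.trans (by simp only [Pi.mul_apply, Pi.neg_apply, Pi.add_apply, Pi.sub_apply]; ring)
  have e2 : Dx (fun t x =>
      (Q t x * Dx (Dx u) t x - (c (u t x) + m₃) * Q t x * Dx u t x)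
        + Q t x * Fop b c m u t x) t x
      = (m₃ * Q t x * Dx (Dx u) t x + Q t x * Dx (Dx (Dx u)) t x
          - deriv c (u t x) * Dx u t x * Q t x * Dx u t x
          - (c (u t x) + m₃) * (m₃ * Q t x * Dx u t x + Q t x * Dx (Dx u) t x))
        + (m₃ * Q t x * Fop b c m u t x
          + Q t x * (Dx (Dt (Dt u)) t x - Dx (Dx (Dx u)) t x
              + deriv b (u t x) * Dx u t x * Dt u t x + b (u t x) * Dx (Dt u) t x
              + deriv c (u t x) * Dx u t x * Dx u t x + c (u t x) * Dx (Dx u) t x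
              + (m₁ + m₂ * b (u t x) + m₃ * c (u t x)) * Dx u t x)) :=
    H2.deriv.trans (by simp only [Fop, Pi.mul_apply, Pi.neg_apply, Pi.add_apply, Pi.sub_apply]; ring)
  rw [e1, e2]
  have c1 : Dx (Dt u) t x = Dt (Dx u) t x := by rw [← Aux15.comm hu]
  have c2 : Dx (Dt (Dt u)) t x = Dt (Dt (Dx u)) t x := by
    rw [← Aux15.comm sDt, Aux15.comm hu]
  rw [c1, c2, hm₁]
  simp only [Fop]
  ring
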